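/- Let R be a field, G a group, J a subgroup of G, and λ a simple R[J]-module. For g ∈ G, let ind_J^{JgJ} λ denote the R[J]-submodule of (ind_J^G λ)|_J spanned by the elements x ⊗ v with x ∈ JgJ and v ∈ λ, so that (ind_J^G λ)|_J = ⊕_{JgJ ∈ J\G/J} ind_J^{JgJ} λ. Then there is an R-linear isomorphism End_{R[G]}(ind_J^G λ) ≅ ⊕_{JgJ ∈ J\G/J} Hom_{R[J]}(λ, ind_J^{JgJ} λ), the sum being over the double cosets of J in G. -/

import Mathlib

set_option synthInstance.maxHeartbeats 1000000
set_option maxHeartbeats 1000000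

open Function

variable {R : Type*} [Field R] {G : Type*} [Group G]
variable {V : Type*} [AddCommGroup V] [Module R V]

/-- The induced module `ind_J^G λ`, modelled as the space of functions `f : G → V`
with `f (g * j) = σ j⁻¹ (f g)` supported on finitely many left cosets of `J`
(this is the usual model of `R[G] ⊗_{R[J]} V`, with `g ⊗ v` corresponding to the function
supported on `gJ` sending `g * j` to `σ j⁻¹ v`). -/
def indCarrier (J : Subgroup G) (σ : Representation R J V) : Submodule R (G → V) where
  carrier := {f | (∀ (g : G) (j : J), f (g * (j : G)) = σ j⁻¹ (f g)) ∧
      ((QuotientGroup.mk : G → G ⧸ J) '' Function.support f).Finite}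
  add_mem' := by
    rintro f g ⟨hf1, hf2⟩ ⟨hg1, hg2⟩
    refine ⟨fun x j => by simp [hf1, hg1], ?_⟩
    refine (hf2.union hg2).subset ?_
    rw [← Set.image_union]
    exact Set.image_mono (Function.support_add _ _)
  zero_mem' := ⟨fun g j => by simp, by simp⟩
  smul_mem' := by
    rintro c f ⟨hf1, hf2⟩
    refine ⟨fun g j => by simp [hf1], ?_⟩
    exact hf2.subset (Set.image_mono (Function.support_const_smul_subset c f))

/-- The representation of `G` on the induced module `ind_J^G λ`, by left translation:
`(x • f) (g) = f (x⁻¹ * g)`. -/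
def indRep (J : Subgroup G) (σ : Representation R J V) :
    Representation R G (indCarrier J σ) where
  toFun x :=
    { toFun := fun f => ⟨fun g => (f : G → V) (x⁻¹ * g), by
        refine ⟨fun g j => ?_, ?_⟩
        · show (f : G → V) (x⁻¹ * (g * (j : G))) = σ j⁻¹ ((f : G → V) (x⁻¹ * g))
          rw [← mul_assoc]
          exact f.2.1 _ j
        refine ((f.2.2).image (fun c : G ⧸ J => x • c)).subset ?_
        rintro c ⟨g, hg, rfl⟩
        refine ⟨QuotientGroup.mk (x⁻¹ * g), ⟨x⁻¹ * g, hg, rfl⟩, ?_⟩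
        show x • (QuotientGroup.mk (x⁻¹ * g) : G ⧸ J) = QuotientGroup.mk g
        rw [MulAction.Quotient.smul_mk, smul_eq_mul, mul_inv_cancel_left]⟩
      map_add' := fun f g => Subtype.ext (funext fun g' => rfl)
      map_smul' := fun c f => Subtype.ext (funext fun g' => rfl) }
  map_one' := by
    apply LinearMap.ext; intro f
    exact Subtype.ext (funext fun g => by simp)
  map_mul' := fun x y => by
    apply LinearMap.ext; intro f
    exact Subtype.ext (funext fun g => by simp [mul_assoc])


/-- The `R[J]`-submodule `ind_J^{JgJ} λ` of `(ind_J^G λ)|_J` consisting of the elements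
supported in the double coset `JgJ` (equivalently, spanned by the elements `x ⊗ v` with
`x ∈ JgJ` and `v ∈ λ`). -/
def indDouble (J : Subgroup G) (σ : Representation R J V) (g : G) :
    Submodule R (indCarrier J σ) where
  carrier := {f | ∀ x : G, x ∉ DoubleCoset.doubleCoset g (J : Set G) (J : Set G) → (f : G → V) x = 0}
  add_mem' := fun hf hg x hx => by
    show (_ : G → V) x + (_ : G → V) x = 0
    rw [hf x hx, hg x hx, add_zero]
  zero_mem' := fun x _ => rfl
  smul_mem' := fun c f hf x hx => by
    show c • (f : G → V) x = 0
    rw [hf x hx, smul_zero]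

/-- The endomorphism algebra `End_{R[G]}(ind_J^G λ)`, as the `R`-submodule of
`G`-equivariant elements of `End_R(ind_J^G λ)`. -/
def EndG (J : Subgroup G) (σ : Representation R J V) :
    Submodule R ((indCarrier J σ) →ₗ[R] (indCarrier J σ)) where
  carrier := {Φ | ∀ (x : G) (f : indCarrier J σ), Φ (indRep J σ x f) = indRep J σ x (Φ f)}
  add_mem' := fun hΦ hΨ x f => by simp [hΦ x f, hΨ x f]
  zero_mem' := fun x f => by simp
  smul_mem' := fun c Φ hΦ x f => by simp [hΦ x f]

instance {H : Type*} [Group H] (σ : Representation R H V) :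
    AddCommGroup σ.asModule := inferInstanceAs (AddCommGroup V)

/-- The space `Hom_{R[J]}(λ, ind_J^{JgJ} λ)` of `J`-equivariant linear maps from `λ` to
`ind_J^{JgJ} λ`. -/
def HomJ (J : Subgroup G) (σ : Representation R J V) (g : G) :
    Submodule R (V →ₗ[R] (indDouble J σ g)) where
  carrier := {φ | ∀ (j : J) (v : V),
    (↑(φ (σ j v)) : indCarrier J σ) = indRep J σ (j : G) ↑(φ v)}
  add_mem' := fun hφ hψ j v => by simp [hφ j v, hψ j v]
  zero_mem' := fun j v => by simp
  smul_mem' := fun c φ hφ j v => by simp [hφ j v]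


section Aux

variable (J : Subgroup G) (σ : Representation R J V)

open DoubleCoset

attribute [local instance] Classical.propDecidable

/-- doubleCoset is right-invariant under J. -/
lemma doset_mul_right_mem {g x : G} (j : J) (hx : x ∈ doubleCoset g (J : Set G) (J : Set G)) :
    x * (j : G) ∈ doubleCoset g (J : Set G) (J : Set G) := by
  obtain ⟨h, hh, k, hk, rfl⟩ := DoubleCoset.mem_doubleCoset.1 hx
  exact DoubleCoset.mem_doubleCoset.2 ⟨h, hh, k * j, J.mul_mem hk j.2, by group⟩

lemma doset_mul_right_iff {g x : G} (j : J) :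
    x * (j : G) ∈ doubleCoset g (J : Set G) (J : Set G) ↔ x ∈ doubleCoset g (J : Set G) (J : Set G) := by
  constructor
  · intro h
    have := doset_mul_right_mem J (j := j⁻¹) h
    simpa using this
  · exact doset_mul_right_mem J j

lemma doset_mul_left_mem {g x : G} (j : J) (hx : x ∈ doubleCoset g (J : Set G) (J : Set G)) :
    (j : G) * x ∈ doubleCoset g (J : Set G) (J : Set G) := by
  obtain ⟨h, hh, k, hk, rfl⟩ := DoubleCoset.mem_doubleCoset.1 hx
  exact DoubleCoset.mem_doubleCoset.2 ⟨j * h, J.mul_mem j.2 hh, k, hk, by group⟩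

lemma doset_mul_left_iff {g x : G} (j : J) :
    (j : G) * x ∈ doubleCoset g (J : Set G) (J : Set G) ↔ x ∈ doubleCoset g (J : Set G) (J : Set G) := by
  constructor
  · intro h
    have := doset_mul_left_mem J (j := j⁻¹) h
    simpa using this
  · exact doset_mul_left_mem J j

/-- If `x` lies in the doubleCoset of `q.out`, then `q = DoubleCoset.mk x`. -/
lemma doset_mk_eq_of_mem {q : DoubleCoset.Quotient (J : Set G) (J : Set G)} {x : G}
    (hx : x ∈ doubleCoset q.out (J : Set G) (J : Set G)) : DoubleCoset.mk J J x = q := by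
  rw [← DoubleCoset.out_eq' J J q]
  exact DoubleCoset.mk_eq_of_doubleCoset_eq (DoubleCoset.doubleCoset_eq_of_mem hx)

lemma mem_doset_out {q : DoubleCoset.Quotient (J : Set G) (J : Set G)} {x : G}
    (hx : DoubleCoset.mk J J x = q) : x ∈ doubleCoset q.out (J : Set G) (J : Set G) := by
  have h : DoubleCoset.mk J J q.out = DoubleCoset.mk J J x := by rw [DoubleCoset.out_eq' J J q, hx]
  obtain ⟨h1, hh1, k1, hk1, rfl⟩ := (DoubleCoset.eq J J _ _).1 h
  exact DoubleCoset.mem_doubleCoset.2 ⟨h1, hh1, k1, hk1, rfl⟩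

/-- The natural map from left cosets to double cosets. -/
noncomputable def dosetMk : G ⧸ J → DoubleCoset.Quotient (J : Set G) (J : Set G) :=
  Quotient.lift (fun x => DoubleCoset.mk J J x) (by
    intro a b hab
    have h : a⁻¹ * b ∈ J := QuotientGroup.leftRel_apply.1 hab
    exact ((DoubleCoset.eq J J a b).2 ⟨1, J.one_mem, a⁻¹ * b, h, by group⟩))

lemma dosetMk_mk (x : G) : dosetMk J (QuotientGroup.mk x) = DoubleCoset.mk J J x := rfl

/-- Members of the same left coset differ by an element of J on the right. -/
lemma exists_of_coset_eq {a b : G} (h : (QuotientGroup.mk a : G ⧸ J) = QuotientGroup.mk b) :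
    ∃ j : J, b = a * (j : G) := by
  have := QuotientGroup.eq.1 h
  exact ⟨⟨a⁻¹ * b, this⟩, by group⟩

/-- Evaluation at a point, as a linear map on the induced module. -/
def evAt (x : G) : indCarrier J σ →ₗ[R] V :=
  (LinearMap.proj x).comp (indCarrier J σ).subtype

@[simp] lemma evAt_apply (x : G) (f : indCarrier J σ) : evAt J σ x f = (f : G → V) x := rfl

@[simp] lemma indRep_coe (g : G) (f : indCarrier J σ) (x : G) :
    ((indRep J σ g f : indCarrier J σ) : G → V) x = (f : G → V) (g⁻¹ * x) := rfl

lemma coeFn_finsum {ι : Type*} (F : ι → indCarrier J σ)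
    (hF : (Function.support F).Finite) (x : G) :
    ((∑ᶠ i, F i : indCarrier J σ) : G → V) x = ∑ᶠ i, ((F i : indCarrier J σ) : G → V) x := by
  have := (evAt J σ x).toAddMonoidHom.map_finsum hF
  simpa using this

open scoped Classical in
/-- `ι v = e ⊗ v`, the canonical `J`-equivariant inclusion of `λ` into `ind`. -/
noncomputable def iotaFun (v : V) : G → V :=
  fun x => if h : x ∈ J then σ (⟨x, h⟩ : J)⁻¹ v else 0

lemma iotaFun_of_mem (v : V) {x : G} (h : x ∈ J) :
    iotaFun J σ v x = σ (⟨x, h⟩ : J)⁻¹ v := dif_pos h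

lemma iotaFun_of_not_mem (v : V) {x : G} (h : x ∉ J) :
    iotaFun J σ v x = 0 := dif_neg h

lemma iotaFun_mem (v : V) : iotaFun J σ v ∈ indCarrier J σ := by
  constructor
  · intro g j
    by_cases hg : g ∈ J
    · have hgj : g * (j : G) ∈ J := J.mul_mem hg j.2
      have hmk : (⟨g * (j : G), hgj⟩ : J) = ⟨g, hg⟩ * j := by ext; rfl
      rw [iotaFun_of_mem J σ v hgj, iotaFun_of_mem J σ v hg, hmk, mul_inv_rev, map_mul]
      rfl
    · have hgj : g * (j : G) ∉ J := by
        intro h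
        exact hg (by simpa using J.mul_mem h (J.inv_mem j.2))
      rw [iotaFun_of_not_mem J σ v hg, iotaFun_of_not_mem J σ v hgj, map_zero]
  · apply Set.Finite.subset (Set.finite_singleton ((QuotientGroup.mk 1 : G ⧸ J)))
    rintro c ⟨x, hx, rfl⟩
    have hxJ : x ∈ J := by
      by_contra h
      exact hx (iotaFun_of_not_mem J σ v h)
    simp only [Set.mem_singleton_iff]
    exact QuotientGroup.eq.2 (by simpa using J.inv_mem hxJ)

noncomputable def iota : V →ₗ[R] indCarrier J σ where
  toFun v := ⟨iotaFun J σ v, iotaFun_mem J σ v⟩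
  map_add' v w := by
    apply Subtype.ext; funext x
    show iotaFun J σ (v + w) x = iotaFun J σ v x + iotaFun J σ w x
    by_cases h : x ∈ J
    · rw [iotaFun_of_mem J σ _ h, iotaFun_of_mem J σ _ h, iotaFun_of_mem J σ _ h, map_add]
    · rw [iotaFun_of_not_mem J σ _ h, iotaFun_of_not_mem J σ _ h, iotaFun_of_not_mem J σ _ h,
        add_zero]
  map_smul' c v := by
    apply Subtype.ext; funext x
    show iotaFun J σ (c • v) x = c • iotaFun J σ v x
    by_cases h : x ∈ J
    · rw [iotaFun_of_mem J σ _ h, iotaFun_of_mem J σ _ h, map_smul]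
    · rw [iotaFun_of_not_mem J σ _ h, iotaFun_of_not_mem J σ _ h, smul_zero]

lemma iota_coe (v : V) : ((iota J σ v : indCarrier J σ) : G → V) = iotaFun J σ v := rfl

lemma iota_equivariant (j : J) (v : V) :
    iota J σ (σ j v) = indRep J σ (j : G) (iota J σ v) := by
  apply Subtype.ext; funext x
  show iotaFun J σ (σ j v) x = iotaFun J σ v ((j : G)⁻¹ * x)
  by_cases hx : x ∈ J
  · have hx' : (j : G)⁻¹ * x ∈ J := J.mul_mem (J.inv_mem j.2) hx
    rw [iotaFun_of_mem J σ _ hx, iotaFun_of_mem J σ _ hx']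
    have hmk : (⟨(j : G)⁻¹ * x, hx'⟩ : J)⁻¹ = (⟨x, hx⟩ : J)⁻¹ * j := by
      ext
      simp [mul_inv_rev]
    rw [hmk, map_mul]
    rfl
  · have hx' : (j : G)⁻¹ * x ∉ J := by
      intro h
      exact hx (by simpa using J.mul_mem j.2 h)
    rw [iotaFun_of_not_mem J σ _ hx, iotaFun_of_not_mem J σ _ hx']

lemma proj_mem_indCarrier (g : G) (f : indCarrier J σ) :
    (DoubleCoset.doubleCoset g (J : Set G) (J : Set G)).indicator (f : G → V) ∈ indCarrier J σ := by
  constructor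
  · intro x j
    by_cases hx : x ∈ DoubleCoset.doubleCoset g (J : Set G) (J : Set G)
    · rw [Set.indicator_of_mem ((doset_mul_right_iff J j).2 hx),
        Set.indicator_of_mem hx]
      exact f.2.1 x j
    · rw [Set.indicator_of_notMem (fun h => hx ((doset_mul_right_iff J j).1 h)),
        Set.indicator_of_notMem hx, map_zero]
  · refine f.2.2.subset (Set.image_mono ?_)
    intro x hx
    by_cases hm : x ∈ DoubleCoset.doubleCoset g (J : Set G) (J : Set G)
    · rwa [Function.mem_support, Set.indicator_of_mem hm] at hx
    · exact absurd (Set.indicator_of_notMem hm _) hx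

lemma proj_mem_indDouble (g : G) (f : indCarrier J σ) :
    (⟨(DoubleCoset.doubleCoset g (J : Set G) (J : Set G)).indicator (f : G → V),
      proj_mem_indCarrier J σ g f⟩ : indCarrier J σ) ∈ indDouble J σ g :=
  fun _ hx => Set.indicator_of_notMem hx _

/-- Projection onto the part of `ind` supported on the double coset of `g`. -/
noncomputable def projL (g : G) : indCarrier J σ →ₗ[R] indDouble J σ g where
  toFun f := ⟨⟨(DoubleCoset.doubleCoset g (J : Set G) (J : Set G)).indicator (f : G → V),
      proj_mem_indCarrier J σ g f⟩, proj_mem_indDouble J σ g f⟩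
  map_add' f₁ f₂ := by
    apply Subtype.ext; apply Subtype.ext; funext x
    show (Set.indicator _ _ x : V) = Set.indicator _ _ x + Set.indicator _ _ x
    by_cases hx : x ∈ DoubleCoset.doubleCoset g (J : Set G) (J : Set G) <;>
      simp [Set.indicator_of_mem, Set.indicator_of_notMem, hx]
  map_smul' c f := by
    apply Subtype.ext; apply Subtype.ext; funext x
    show (Set.indicator _ _ x : V) = c • (Set.indicator _ _ x : V)
    by_cases hx : x ∈ DoubleCoset.doubleCoset g (J : Set G) (J : Set G) <;>
      simp [Set.indicator_of_mem, Set.indicator_of_notMem, hx]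

lemma projL_coe (g : G) (f : indCarrier J σ) (x : G) :
    ((projL J σ g f : indCarrier J σ) : G → V) x
      = (DoubleCoset.doubleCoset g (J : Set G) (J : Set G)).indicator (f : G → V) x := rfl

lemma projL_equivariant (g : G) (j : J) (f : indCarrier J σ) :
    (projL J σ g (indRep J σ (j : G) f) : indCarrier J σ)
      = indRep J σ (j : G) (projL J σ g f : indCarrier J σ) := by
  apply Subtype.ext; funext x
  rw [projL_coe]
  show _ = ((projL J σ g f : indCarrier J σ) : G → V) ((j : G)⁻¹ * x)
  rw [projL_coe]
  by_cases hx : x ∈ DoubleCoset.doubleCoset g (J : Set G) (J : Set G)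
  · have hx' : (j : G)⁻¹ * x ∈ DoubleCoset.doubleCoset g (J : Set G) (J : Set G) :=
      (doset_mul_left_iff J j⁻¹).2 hx
    rw [Set.indicator_of_mem hx, Set.indicator_of_mem hx']
    rfl
  · have hx' : (j : G)⁻¹ * x ∉ DoubleCoset.doubleCoset g (J : Set G) (J : Set G) := by
      intro h
      exact hx (by simpa using (doset_mul_left_iff J j).2 h)
    rw [Set.indicator_of_notMem hx, Set.indicator_of_notMem hx']

lemma projL_of_mem_indDouble {g : G} {f : indCarrier J σ} (hf : f ∈ indDouble J σ g) :
    (projL J σ g f : indCarrier J σ) = f := by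
  apply Subtype.ext; funext x
  rw [projL_coe]
  by_cases hx : x ∈ DoubleCoset.doubleCoset g (J : Set G) (J : Set G)
  · rw [Set.indicator_of_mem hx]
  · rw [Set.indicator_of_notMem hx, hf x hx]

lemma projL_of_disjoint {g g' : G} {f : indCarrier J σ} (hf : f ∈ indDouble J σ g')
    (hd : Disjoint (DoubleCoset.doubleCoset g (J : Set G) (J : Set G))
      (DoubleCoset.doubleCoset g' (J : Set G) (J : Set G))) :
    projL J σ g f = 0 := by
  apply Subtype.ext; apply Subtype.ext; funext x
  rw [projL_coe]
  show _ = (0 : G → V) x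
  by_cases hx : x ∈ DoubleCoset.doubleCoset g (J : Set G) (J : Set G)
  · rw [Set.indicator_of_mem hx]
    exact hf x (fun hx' => (Set.disjoint_left.1 hd hx) hx')
  · rw [Set.indicator_of_notMem hx]
    rfl

/-- The set of double cosets on which `f` is nonzero is finite. -/
lemma finite_projL_support (f : indCarrier J σ) :
    {q : DoubleCoset.Quotient (J : Set G) (J : Set G) | projL J σ q.out f ≠ 0}.Finite := by
  apply Set.Finite.subset ((f.2.2).image (dosetMk J))
  intro q hq
  have : ∃ x, (DoubleCoset.doubleCoset q.out (J : Set G) (J : Set G)).indicator (f : G → V) x ≠ 0 := by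
    by_contra h
    push_neg at h
    exact hq (by
      apply Subtype.ext; apply Subtype.ext; funext x
      rw [projL_coe]
      exact h x)
  obtain ⟨x, hx⟩ := this
  have hmem : x ∈ DoubleCoset.doubleCoset q.out (J : Set G) (J : Set G) := by
    by_contra h
    exact hx (Set.indicator_of_notMem h _)
  have hfx : (f : G → V) x ≠ 0 := by
    rw [Set.indicator_of_mem hmem] at hx
    exact hx
  exact ⟨QuotientGroup.mk x, ⟨x, hfx, rfl⟩, by rw [dosetMk_mk]; exact (doset_mk_eq_of_mem J hmem)⟩

/-- Partition of identity: summing the double coset projections recovers `f`. -/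
lemma finsum_projL (f : indCarrier J σ) :
    (∑ᶠ q : DoubleCoset.Quotient (J : Set G) (J : Set G), (projL J σ q.out f : indCarrier J σ)) = f := by
  have hfin : (Function.support fun q : DoubleCoset.Quotient (J : Set G) (J : Set G) =>
      (projL J σ q.out f : indCarrier J σ)).Finite := by
    apply (finite_projL_support J σ f).subset
    intro q hq h0
    apply hq
    show ((projL J σ q.out f : indCarrier J σ)) = 0
    rw [h0]; rfl
  apply Subtype.ext; funext x
  rw [coeFn_finsum J σ _ hfin x]
  rw [finsum_eq_single _ (DoubleCoset.mk J J x)]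
  · rw [projL_coe, Set.indicator_of_mem (mem_doset_out J rfl)]
  · intro q hq
    rw [projL_coe, Set.indicator_of_notMem]
    intro hmem
    exact hq (doset_mk_eq_of_mem J hmem).symm

/-- The set of left cosets on which `f` is nonzero (via out-representatives). -/
lemma finite_coset_support (f : indCarrier J σ) :
    {c : G ⧸ J | (f : G → V) c.out ≠ 0}.Finite := by
  apply Set.Finite.subset f.2.2
  intro c hc
  exact ⟨c.out, hc, QuotientGroup.out_eq' c⟩

/-- Decomposition of `f` into its left coset pieces. -/
lemma finsum_decomp (f : indCarrier J σ) :
    (∑ᶠ c : G ⧸ J, indRep J σ c.out (iota J σ ((f : G → V) c.out))) = f := by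
  have hfin : (Function.support fun c : G ⧸ J =>
      indRep J σ c.out (iota J σ ((f : G → V) c.out))).Finite := by
    apply (finite_coset_support J σ f).subset
    intro c hc
    simp only [Set.mem_setOf_eq]
    intro h0
    apply hc
    show indRep J σ c.out (iota J σ ((f : G → V) c.out)) = 0
    rw [h0, map_zero, map_zero]
  apply Subtype.ext; funext x
  rw [coeFn_finsum J σ _ hfin x]
  rw [finsum_eq_single _ (QuotientGroup.mk x)]
  · set c := (QuotientGroup.mk x : G ⧸ J) with hcdef
    show iotaFun J σ ((f : G → V) c.out) (c.out⁻¹ * x) = (f : G → V) x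
    have hc : (QuotientGroup.mk c.out : G ⧸ J) = QuotientGroup.mk x := QuotientGroup.out_eq' c
    have hmem : c.out⁻¹ * x ∈ J := QuotientGroup.eq.1 hc
    rw [iotaFun_of_mem J σ _ hmem]
    have := f.2.1 c.out ⟨c.out⁻¹ * x, hmem⟩
    simp only [mul_inv_cancel_left] at this
    rw [← this]
  · intro c hc
    show iotaFun J σ ((f : G → V) c.out) (c.out⁻¹ * x) = 0
    rw [iotaFun_of_not_mem]
    intro hmem
    apply hc
    have : (QuotientGroup.mk c.out : G ⧸ J) = QuotientGroup.mk x := QuotientGroup.eq.2 hmem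
    rw [← this, QuotientGroup.out_eq']

lemma indRep_mul (x y : G) (f : indCarrier J σ) :
    indRep J σ x (indRep J σ y f) = indRep J σ (x * y) f := by
  rw [map_mul]; rfl

/-- Terms of the Frobenius-reciprocity sum only depend on the left coset. -/
lemma Bterm_coset {g : G} {φ : V →ₗ[R] indDouble J σ g} (hφ : φ ∈ HomJ J σ g)
    (w : G → V) (hw : ∀ (a : G) (j : J), w (a * (j : G)) = σ j⁻¹ (w a)) (a : G) (j : J) :
    indRep J σ (a * (j : G)) ((φ (w (a * (j : G)))) : indCarrier J σ)
      = indRep J σ a ((φ (w a)) : indCarrier J σ) := by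
  rw [hw a j]
  have h2 : ((φ (σ j⁻¹ (w a))) : indCarrier J σ)
      = indRep J σ ((j⁻¹ : J) : G) ((φ (w a)) : indCarrier J σ) := hφ j⁻¹ (w a)
  rw [h2, indRep_mul]
  congr 1
  simp

lemma Bapp_support_fin {g : G} (φ : V →ₗ[R] indDouble J σ g) (f : indCarrier J σ) :
    (Function.support fun c : G ⧸ J =>
      indRep J σ c.out ((φ ((f : G → V) c.out)) : indCarrier J σ)).Finite := by
  apply (finite_coset_support J σ f).subset
  intro c hc
  simp only [Set.mem_setOf_eq]
  intro h0
  apply hc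
  show indRep J σ c.out ((φ ((f : G → V) c.out)) : indCarrier J σ) = 0
  rw [h0]
  simp

/-- The Frobenius-reciprocity extension of `φ : λ → ind_J^{JgJ} λ` to an endomorphism
of `ind_J^G λ`. -/
noncomputable def Bapp (g : G) (φ : V →ₗ[R] indDouble J σ g) :
    indCarrier J σ →ₗ[R] indCarrier J σ where
  toFun f := ∑ᶠ c : G ⧸ J, indRep J σ c.out ((φ ((f : G → V) c.out)) : indCarrier J σ)
  map_add' f₁ f₂ := by
    have h : ∀ c : G ⧸ J,
        indRep J σ c.out ((φ (((f₁ + f₂ : indCarrier J σ) : G → V) c.out)) : indCarrier J σ)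
        = indRep J σ c.out ((φ ((f₁ : G → V) c.out)) : indCarrier J σ)
          + indRep J σ c.out ((φ ((f₂ : G → V) c.out)) : indCarrier J σ) := by
      intro c
      have : ((f₁ + f₂ : indCarrier J σ) : G → V) c.out
          = (f₁ : G → V) c.out + (f₂ : G → V) c.out := rfl
      rw [this, map_add, Submodule.coe_add, map_add]
    show (∑ᶠ c : G ⧸ J,
        indRep J σ c.out ((φ (((f₁ + f₂ : indCarrier J σ) : G → V) c.out)) : indCarrier J σ))
      = (∑ᶠ c : G ⧸ J, indRep J σ c.out ((φ ((f₁ : G → V) c.out)) : indCarrier J σ))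
        + (∑ᶠ c : G ⧸ J, indRep J σ c.out ((φ ((f₂ : G → V) c.out)) : indCarrier J σ))
    rw [finsum_congr h, finsum_add_distrib (Bapp_support_fin J σ φ f₁)
      (Bapp_support_fin J σ φ f₂)]
  map_smul' r f := by
    have h : ∀ c : G ⧸ J,
        indRep J σ c.out ((φ (((r • f : indCarrier J σ) : G → V) c.out)) : indCarrier J σ)
        = r • indRep J σ c.out ((φ ((f : G → V) c.out)) : indCarrier J σ) := by
      intro c
      have : ((r • f : indCarrier J σ) : G → V) c.out = r • ((f : G → V) c.out) := rfl
      rw [this, map_smul, SetLike.val_smul, map_smul]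
    show (∑ᶠ c : G ⧸ J,
        indRep J σ c.out ((φ (((r • f : indCarrier J σ) : G → V) c.out)) : indCarrier J σ))
      = r • ∑ᶠ c : G ⧸ J, indRep J σ c.out ((φ ((f : G → V) c.out)) : indCarrier J σ)
    rw [finsum_congr h]
    exact (smul_finsum' r (Bapp_support_fin J σ φ f)).symm

lemma Bapp_apply (g : G) (φ : V →ₗ[R] indDouble J σ g) (f : indCarrier J σ) :
    Bapp J σ g φ f
      = ∑ᶠ c : G ⧸ J, indRep J σ c.out ((φ ((f : G → V) c.out)) : indCarrier J σ) := rfl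

lemma Bapp_mem_EndG {g : G} {φ : V →ₗ[R] indDouble J σ g} (hφ : φ ∈ HomJ J σ g) :
    Bapp J σ g φ ∈ EndG J σ := by
  intro y f
  rw [Bapp_apply, Bapp_apply]
  have hcoe : ∀ c : G ⧸ J, ((indRep J σ y f : indCarrier J σ) : G → V) c.out
      = (f : G → V) (y⁻¹ * c.out) := fun c => rfl
  -- RHS: pull `indRep y` inside the finsum
  have hRHS : indRep J σ y
      (∑ᶠ c : G ⧸ J, indRep J σ c.out ((φ ((f : G → V) c.out)) : indCarrier J σ))
      = ∑ᶠ c : G ⧸ J, indRep J σ (y * c.out) ((φ ((f : G → V) c.out)) : indCarrier J σ) := by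
    have h1 : indRep J σ y
        (∑ᶠ c : G ⧸ J, indRep J σ c.out ((φ ((f : G → V) c.out)) : indCarrier J σ))
        = ∑ᶠ c : G ⧸ J, indRep J σ y
            (indRep J σ c.out ((φ ((f : G → V) c.out)) : indCarrier J σ)) := by
      simpa using (indRep J σ y).toAddMonoidHom.map_finsum (Bapp_support_fin J σ φ f)
    rw [h1]
    exact finsum_congr fun c => indRep_mul J σ y c.out _
  rw [hRHS]
  set F : G ⧸ J → indCarrier J σ :=
    fun c => indRep J σ c.out ((φ ((f : G → V) (y⁻¹ * c.out))) : indCarrier J σ) with hF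
  have hw : ∀ (a : G) (j : J), (f : G → V) (y⁻¹ * (a * (j : G))) = σ j⁻¹ ((f : G → V) (y⁻¹ * a)) := by
    intro a j
    rw [← mul_assoc]
    exact f.2.1 (y⁻¹ * a) j
  have hkey : ∀ c : G ⧸ J,
      indRep J σ (y * c.out) ((φ ((f : G → V) c.out)) : indCarrier J σ) = F (y • c) := by
    intro c
    have hmk : (QuotientGroup.mk (y * c.out) : G ⧸ J) = y • c := by
      have : (QuotientGroup.mk (y * c.out) : G ⧸ J) = y • QuotientGroup.mk c.out := by
        rw [MulAction.Quotient.smul_mk]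
        rfl
      rw [this, QuotientGroup.out_eq']
    have hmk2 : (QuotientGroup.mk (y * c.out) : G ⧸ J) = QuotientGroup.mk (y • c).out := by
      rw [hmk, QuotientGroup.out_eq']
    obtain ⟨j, hj⟩ := exists_of_coset_eq J hmk2
    rw [hF]
    simp only
    rw [hj]
    rw [Bterm_coset J σ hφ (fun a => (f : G → V) (y⁻¹ * a)) hw (y * c.out) j]
    simp only [inv_mul_cancel_left]
  rw [finsum_congr hkey]
  have h2 := finsum_comp_equiv (MulAction.toPerm y : Equiv.Perm (G ⧸ J)) (f := F)
  simp only [MulAction.toPerm_apply] at h2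
  rw [h2]
  exact finsum_congr fun c => rfl

/-- `Bapp` recovers `φ` on the image of `ι`. -/
lemma Bapp_iota {g : G} {φ : V →ₗ[R] indDouble J σ g} (hφ : φ ∈ HomJ J σ g) (v : V) :
    Bapp J σ g φ (iota J σ v) = ((φ v) : indCarrier J σ) := by
  rw [Bapp_apply]
  rw [finsum_eq_single _ (QuotientGroup.mk (1 : G))]
  · set c := (QuotientGroup.mk (1 : G) : G ⧸ J) with hc
    have hmem : c.out ∈ J := by
      have h1 : (QuotientGroup.mk c.out : G ⧸ J) = QuotientGroup.mk (1 : G) :=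
        QuotientGroup.out_eq' c
      have := QuotientGroup.eq.1 h1
      simpa using J.inv_mem this
    have hval : ((iota J σ v : indCarrier J σ) : G → V) c.out
        = σ (⟨c.out, hmem⟩ : J)⁻¹ v := by
      rw [iota_coe, iotaFun_of_mem J σ v hmem]
    rw [hval]
    have h2 : ((φ (σ (⟨c.out, hmem⟩ : J)⁻¹ v)) : indCarrier J σ)
        = indRep J σ (((⟨c.out, hmem⟩ : J)⁻¹ : J) : G) ((φ v) : indCarrier J σ) :=
      hφ (⟨c.out, hmem⟩ : J)⁻¹ v
    rw [h2, indRep_mul]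
    have : c.out * (((⟨c.out, hmem⟩ : J)⁻¹ : J) : G) = 1 := by simp
    rw [this, map_one]
    rfl
  · intro c hc
    have hmem : c.out ∉ J := by
      intro h
      apply hc
      rw [← QuotientGroup.out_eq' c]
      exact QuotientGroup.eq.2 (by simpa using J.inv_mem h)
    show indRep J σ c.out
      ((φ (((iota J σ v : indCarrier J σ) : G → V) c.out)) : indCarrier J σ) = 0
    rw [iota_coe, iotaFun_of_not_mem J σ v hmem]
    simp


lemma Bapp_zero (g : G) : Bapp J σ g 0 = 0 := by
  apply LinearMap.ext; intro f
  rw [Bapp_apply]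
  show _ = (0 : indCarrier J σ)
  apply finsum_eq_zero_of_forall_eq_zero
  intro c
  show indRep J σ c.out (((0 : V →ₗ[R] indDouble J σ g) ((f : G → V) c.out) : indCarrier J σ)) = 0
  rw [LinearMap.zero_apply]
  simp

lemma Bapp_addphi (g : G) (φ₁ φ₂ : V →ₗ[R] indDouble J σ g) :
    Bapp J σ g (φ₁ + φ₂) = Bapp J σ g φ₁ + Bapp J σ g φ₂ := by
  apply LinearMap.ext; intro f
  show Bapp J σ g (φ₁ + φ₂) f = Bapp J σ g φ₁ f + Bapp J σ g φ₂ f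
  rw [Bapp_apply, Bapp_apply, Bapp_apply]
  have h : ∀ c : G ⧸ J,
      indRep J σ c.out (((φ₁ + φ₂) ((f : G → V) c.out) : indCarrier J σ))
      = indRep J σ c.out ((φ₁ ((f : G → V) c.out)) : indCarrier J σ)
        + indRep J σ c.out ((φ₂ ((f : G → V) c.out)) : indCarrier J σ) := by
    intro c
    rw [LinearMap.add_apply, Submodule.coe_add, map_add]
  rw [finsum_congr h,
    finsum_add_distrib (Bapp_support_fin J σ φ₁ f) (Bapp_support_fin J σ φ₂ f)]

lemma Bapp_smulphi (g : G) (r : R) (φ : V →ₗ[R] indDouble J σ g) :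
    Bapp J σ g (r • φ) = r • Bapp J σ g φ := by
  apply LinearMap.ext; intro f
  show Bapp J σ g (r • φ) f = r • Bapp J σ g φ f
  rw [Bapp_apply, Bapp_apply]
  have h : ∀ c : G ⧸ J,
      indRep J σ c.out (((r • φ) ((f : G → V) c.out) : indCarrier J σ))
      = r • indRep J σ c.out ((φ ((f : G → V) c.out)) : indCarrier J σ) := by
    intro c
    rw [LinearMap.smul_apply, SetLike.val_smul, map_smul]
  rw [finsum_congr h]
  exact (smul_finsum' r (Bapp_support_fin J σ φ f)).symm

open DirectSum in
lemma Bsupp_fin (ψ : ⨁ q : DoubleCoset.Quotient (J : Set G) (J : Set G), HomJ J σ q.out) :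
    (Function.support fun q : DoubleCoset.Quotient (J : Set G) (J : Set G) =>
      Bapp J σ q.out (ψ q).1).Finite := by
  classical
  apply Set.Finite.subset (ψ.support : Finset _).finite_toSet
  intro q hq
  simp only [Finset.coe_sort_coe, Finset.mem_coe, DFinsupp.mem_support_toFun]
  intro h0
  apply hq
  show Bapp J σ q.out (ψ q).1 = 0
  rw [h0]
  show Bapp J σ q.out (0 : V →ₗ[R] indDouble J σ q.out) = 0
  exact Bapp_zero J σ q.out

lemma finsum_LM_apply {ι : Type*} (T : ι → (indCarrier J σ →ₗ[R] indCarrier J σ))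
    (hT : (Function.support T).Finite) (f : indCarrier J σ) :
    (∑ᶠ i, T i) f = ∑ᶠ i, T i f := by
  simpa using (LinearMap.applyₗ (R := R) f).toAddMonoidHom.map_finsum hT

open DirectSum in
lemma Bsupp_fin_apply (ψ : ⨁ q : DoubleCoset.Quotient (J : Set G) (J : Set G), HomJ J σ q.out)
    (f : indCarrier J σ) :
    (Function.support fun q : DoubleCoset.Quotient (J : Set G) (J : Set G) =>
      Bapp J σ q.out (ψ q).1 f).Finite := by
  apply (Bsupp_fin J σ ψ).subset
  intro q hq
  intro h0
  apply hq
  show Bapp J σ q.out (ψ q).1 f = 0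
  have h1 : Bapp J σ q.out (ψ q).1 = 0 := h0
  rw [h1]
  rfl

open DirectSum in
lemma Bsum_mem_EndG (ψ : ⨁ q : DoubleCoset.Quotient (J : Set G) (J : Set G), HomJ J σ q.out) :
    (∑ᶠ q : DoubleCoset.Quotient (J : Set G) (J : Set G), Bapp J σ q.out (ψ q).1) ∈ EndG J σ := by
  intro x f
  rw [finsum_LM_apply J σ _ (Bsupp_fin J σ ψ), finsum_LM_apply J σ _ (Bsupp_fin J σ ψ)]
  have h1 : indRep J σ x
      (∑ᶠ q : DoubleCoset.Quotient (J : Set G) (J : Set G), Bapp J σ q.out (ψ q).1 f)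
      = ∑ᶠ q : DoubleCoset.Quotient (J : Set G) (J : Set G),
          indRep J σ x (Bapp J σ q.out (ψ q).1 f) := by
    simpa using (indRep J σ x).toAddMonoidHom.map_finsum (Bsupp_fin_apply J σ ψ f)
  rw [h1]
  exact finsum_congr fun q => Bapp_mem_EndG J σ (ψ q).2 x f

open DirectSum in
/-- The inverse map, sending a family of `J`-maps `λ → ind_J^{JgJ} λ` to a `G`-endomorphism. -/
noncomputable def Bsum :
    (⨁ q : DoubleCoset.Quotient (J : Set G) (J : Set G), HomJ J σ q.out) →ₗ[R] (EndG J σ) where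
  toFun ψ := ⟨∑ᶠ q : DoubleCoset.Quotient (J : Set G) (J : Set G), Bapp J σ q.out (ψ q).1,
    Bsum_mem_EndG J σ ψ⟩
  map_add' ψ₁ ψ₂ := by
    apply Subtype.ext
    show (∑ᶠ q : DoubleCoset.Quotient (J : Set G) (J : Set G), Bapp J σ q.out ((ψ₁ + ψ₂) q).1)
      = (∑ᶠ q : DoubleCoset.Quotient (J : Set G) (J : Set G), Bapp J σ q.out (ψ₁ q).1)
        + (∑ᶠ q : DoubleCoset.Quotient (J : Set G) (J : Set G), Bapp J σ q.out (ψ₂ q).1)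
    have h : ∀ q : DoubleCoset.Quotient (J : Set G) (J : Set G),
        Bapp J σ q.out ((ψ₁ + ψ₂) q).1
        = Bapp J σ q.out (ψ₁ q).1 + Bapp J σ q.out (ψ₂ q).1 := by
      intro q
      have h2 : ((ψ₁ + ψ₂) q).1 = (ψ₁ q).1 + (ψ₂ q).1 := by
        rw [DirectSum.add_apply]
        rfl
      rw [h2, Bapp_addphi]
    rw [finsum_congr h, finsum_add_distrib (Bsupp_fin J σ ψ₁) (Bsupp_fin J σ ψ₂)]
  map_smul' r ψ := by
    apply Subtype.ext
    show (∑ᶠ q : DoubleCoset.Quotient (J : Set G) (J : Set G), Bapp J σ q.out ((r • ψ) q).1)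
      = r • (∑ᶠ q : DoubleCoset.Quotient (J : Set G) (J : Set G), Bapp J σ q.out (ψ q).1)
    have h : ∀ q : DoubleCoset.Quotient (J : Set G) (J : Set G),
        Bapp J σ q.out ((r • ψ) q).1 = r • Bapp J σ q.out (ψ q).1 := by
      intro q
      have h2 : ((r • ψ) q).1 = r • (ψ q).1 := by
        rw [DFinsupp.smul_apply]
        rfl
      rw [h2, Bapp_smulphi]
    rw [finsum_congr h]
    exact (smul_finsum' r (Bsupp_fin J σ ψ)).symm

open DirectSum in
lemma psi_support_fin (ψ : ⨁ q : DoubleCoset.Quotient (J : Set G) (J : Set G), HomJ J σ q.out)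
    (v : V) :
    (Function.support fun q : DoubleCoset.Quotient (J : Set G) (J : Set G) =>
      (((ψ q).1 v : indCarrier J σ))).Finite := by
  classical
  apply Set.Finite.subset (ψ.support : Finset _).finite_toSet
  intro q hq
  simp only [Finset.coe_sort_coe, Finset.mem_coe, DFinsupp.mem_support_toFun]
  intro h0
  apply hq
  show (((ψ q).1 v : indCarrier J σ)) = 0
  rw [h0]
  rfl

open DirectSum in
lemma Bsum_iota (ψ : ⨁ q : DoubleCoset.Quotient (J : Set G) (J : Set G), HomJ J σ q.out) (v : V) :
    (Bsum J σ ψ).1 (iota J σ v)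
      = ∑ᶠ q : DoubleCoset.Quotient (J : Set G) (J : Set G), (((ψ q).1 v : indCarrier J σ)) := by
  show (∑ᶠ q : DoubleCoset.Quotient (J : Set G) (J : Set G), Bapp J σ q.out (ψ q).1) (iota J σ v) = _
  rw [finsum_LM_apply J σ _ (Bsupp_fin J σ ψ)]
  exact finsum_congr fun q => Bapp_iota J σ (ψ q).2 v

open DirectSum in
lemma Bsum_recover (ψ : ⨁ q : DoubleCoset.Quotient (J : Set G) (J : Set G), HomJ J σ q.out)
    (q : DoubleCoset.Quotient (J : Set G) (J : Set G)) (v : V) :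
    projL J σ q.out ((Bsum J σ ψ).1 (iota J σ v)) = (ψ q).1 v := by
  rw [Bsum_iota]
  have hmap : projL J σ q.out
      (∑ᶠ q' : DoubleCoset.Quotient (J : Set G) (J : Set G), (((ψ q').1 v : indCarrier J σ)))
      = ∑ᶠ q' : DoubleCoset.Quotient (J : Set G) (J : Set G),
          projL J σ q.out (((ψ q').1 v : indCarrier J σ)) := by
    simpa using (projL J σ q.out).toAddMonoidHom.map_finsum (psi_support_fin J σ ψ v)
  rw [hmap, finsum_eq_single _ q]
  · apply Subtype.ext
    exact projL_of_mem_indDouble J σ ((ψ q).1 v).2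
  · intro q' hq'
    exact projL_of_disjoint J σ ((ψ q').1 v).2 (DoubleCoset.disjoint_out (fun h => hq' (h.symm ▸ rfl)))

/-- A `G`-equivariant endomorphism of `ind` is determined by its values on `ι`. -/
lemma EndG_ext {Φ₁ Φ₂ : indCarrier J σ →ₗ[R] indCarrier J σ}
    (h₁ : Φ₁ ∈ EndG J σ) (h₂ : Φ₂ ∈ EndG J σ)
    (h : ∀ v : V, Φ₁ (iota J σ v) = Φ₂ (iota J σ v)) : Φ₁ = Φ₂ := by
  have key : ∀ (Φ : indCarrier J σ →ₗ[R] indCarrier J σ), Φ ∈ EndG J σ →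
      ∀ f : indCarrier J σ,
        Φ f = ∑ᶠ c : G ⧸ J, indRep J σ c.out (Φ (iota J σ ((f : G → V) c.out))) := by
    intro Φ hΦ f
    have hfin : (Function.support fun c : G ⧸ J =>
        indRep J σ c.out (iota J σ ((f : G → V) c.out))).Finite := by
      apply (finite_coset_support J σ f).subset
      intro c hc
      simp only [Set.mem_setOf_eq]
      intro h0
      apply hc
      show indRep J σ c.out (iota J σ ((f : G → V) c.out)) = 0
      rw [h0, map_zero, map_zero]
    conv_lhs => rw [← finsum_decomp J σ f]
    have hmap : Φ (∑ᶠ c : G ⧸ J, indRep J σ c.out (iota J σ ((f : G → V) c.out)))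
        = ∑ᶠ c : G ⧸ J, Φ (indRep J σ c.out (iota J σ ((f : G → V) c.out))) := by
      simpa using Φ.toAddMonoidHom.map_finsum hfin
    rw [hmap]
    exact finsum_congr fun c => hΦ c.out (iota J σ ((f : G → V) c.out))
  apply LinearMap.ext; intro f
  rw [key Φ₁ h₁ f, key Φ₂ h₂ f]
  exact finsum_congr fun c => by rw [h]

/-- Simplicity: a `J`-equivariant map out of `λ` vanishing at one nonzero vector vanishes. -/
lemma homJ_eq_zero (hsimple : IsSimpleModule (MonoidAlgebra R J) σ.asModule)
    {g : G} {φ : V →ₗ[R] indDouble J σ g} (hφ : φ ∈ HomJ J σ g)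
    {v₀ : V} (hv₀ : v₀ ≠ 0) (h0 : φ v₀ = 0) : φ = 0 := by
  have hstep : ∀ (j : J) (v : V), φ v = 0 → φ (σ j v) = 0 := by
    intro j v hv
    have := hφ j v
    rw [hv] at this
    apply Subtype.ext
    have hz : ((φ (σ j v)) : indCarrier J σ) = 0 := by
      rw [this]
      show indRep J σ (j : G) ((0 : indDouble J σ g) : indCarrier J σ) = 0
      simp only [ZeroMemClass.coe_zero, map_zero]
    exact hz
  let K : Submodule (MonoidAlgebra R J) σ.asModule :=
    { carrier := {v | φ v = 0}
      add_mem' := by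
        intro a b ha hb
        show φ ((show V from a) + (show V from b)) = 0
        rw [map_add, ha, hb, add_zero]
      zero_mem' := map_zero φ
      smul_mem' := by
        intro a v hv
        show φ (a • v) = 0
        have hv' : φ v = 0 := hv
        have hall : ∀ a : MonoidAlgebra R J, φ (σ.asAlgebraHom a v) = 0 := by
          intro a
          induction a using MonoidAlgebra.induction_on with
          | of j =>
            rw [Representation.asAlgebraHom_of]
            exact hstep j v hv'
          | add a b ha hb =>
            rw [map_add, show (σ.asAlgebraHom a + σ.asAlgebraHom b) v
                = σ.asAlgebraHom a v + σ.asAlgebraHom b v from rfl, map_add, ha, hb, add_zero]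
          | smul r a ha =>
            rw [map_smul, show (r • σ.asAlgebraHom a) v = r • σ.asAlgebraHom a v from rfl,
              map_smul, ha, smul_zero]
        have hsmul : (a • v : σ.asModule) = σ.asAlgebraHom a v := rfl
        rw [hsmul]
        exact hall a }
  have hv₀K : v₀ ∈ K := h0
  have : K = ⊤ := by
    rcases eq_bot_or_eq_top K with h | h
    · exfalso
      rw [h] at hv₀K
      exact hv₀ hv₀K
    · exact h
  apply LinearMap.ext; intro v
  have hvK : (show σ.asModule from v) ∈ K := by rw [this]; exact Submodule.mem_top
  rw [LinearMap.zero_apply]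
  exact hvK

end Aux




open DirectSum in
/-- Let `R` be a field, `G` a group, `J` a subgroup of `G` and `λ` a simple `R[J]`-module
(given as a representation `σ` of `J` on `V`).  There is an `R`-linear isomorphism
`End_{R[G]}(ind_J^G λ) ≅ ⊕_{JgJ ∈ J\G/J} Hom_{R[J]}(λ, ind_J^{JgJ} λ)`, the direct sum
being over the double cosets of `J` in `G` (with `Quot.out` as set of representatives). -/
theorem stmt_5 (J : Subgroup G) (σ : Representation R J V)
    (hsimple : IsSimpleModule (MonoidAlgebra R J) σ.asModule) :
    Nonempty ((EndG J σ) ≃ₗ[R]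
      (⨁ q : DoubleCoset.Quotient (J : Set G) (J : Set G), HomJ J σ q.out)) := by
  classical
  haveI := hsimple
  haveI : Nontrivial σ.asModule := IsSimpleModule.nontrivial (MonoidAlgebra R J) σ.asModule
  obtain ⟨a, b, hab⟩ := exists_pair_ne σ.asModule
  set v₀ : V := a - b with hv₀def
  have hv₀ : v₀ ≠ 0 := sub_ne_zero_of_ne hab
  have hinj : Function.Injective (Bsum J σ) := by
    intro ψ₁ ψ₂ h12
    refine DFinsupp.ext fun q => ?_
    apply Subtype.ext
    apply LinearMap.ext; intro v
    have hrec1 := Bsum_recover J σ ψ₁ q v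
    have hrec2 := Bsum_recover J σ ψ₂ q v
    rw [h12] at hrec1
    exact hrec1.symm.trans hrec2
  have hsurj : Function.Surjective (Bsum J σ) := by
    rintro ⟨Φ, hΦ⟩
    let φq : ∀ q : DoubleCoset.Quotient (J : Set G) (J : Set G), V →ₗ[R] indDouble J σ q.out :=
      fun q => (projL J σ q.out).comp (Φ.comp (iota J σ))
    have hφqmem : ∀ q, φq q ∈ HomJ J σ q.out := by
      intro q j v
      show ((projL J σ q.out (Φ (iota J σ (σ j v)))) : indCarrier J σ)
        = indRep J σ (j : G) ((projL J σ q.out (Φ (iota J σ v))) : indCarrier J σ)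
      rw [iota_equivariant, hΦ (j : G) (iota J σ v)]
      exact projL_equivariant J σ q.out j (Φ (iota J σ v))
    have hS : {q : DoubleCoset.Quotient (J : Set G) (J : Set G) |
        projL J σ q.out (Φ (iota J σ v₀)) ≠ 0}.Finite :=
      finite_projL_support J σ (Φ (iota J σ v₀))
    set ψ : ⨁ q : DoubleCoset.Quotient (J : Set G) (J : Set G), HomJ J σ q.out :=
      DFinsupp.mk hS.toFinset
        (fun q => (⟨φq q.1, hφqmem q.1⟩ : HomJ J σ (Quotient.out q.1))) with hψdef
    have hψq : ∀ q, ψ q = ⟨φq q, hφqmem q⟩ := by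
      intro q
      rw [hψdef]
      by_cases hq : q ∈ hS.toFinset
      · rw [DFinsupp.mk_apply, dif_pos hq]
      · rw [DFinsupp.mk_apply, dif_neg hq]
        symm
        apply Subtype.ext
        show φq q = 0
        apply homJ_eq_zero J σ hsimple (hφqmem q) hv₀
        show projL J σ q.out (Φ (iota J σ v₀)) = 0
        by_contra h
        exact hq (hS.mem_toFinset.2 h)
    refine ⟨ψ, ?_⟩
    apply Subtype.ext
    apply EndG_ext J σ (Bsum J σ ψ).2 hΦ
    intro v
    show (Bsum J σ ψ).1 (iota J σ v) = Φ (iota J σ v)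
    rw [Bsum_iota]
    have hterm : ∀ q : DoubleCoset.Quotient (J : Set G) (J : Set G),
        (((ψ q).1 v : indCarrier J σ))
          = ((projL J σ q.out (Φ (iota J σ v))) : indCarrier J σ) := by
      intro q
      rw [hψq q]
      rfl
    rw [finsum_congr hterm]
    exact finsum_projL J σ (Φ (iota J σ v))
  exact ⟨(LinearEquiv.ofBijective (Bsum J σ) ⟨hinj, hsurj⟩).symm⟩
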